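/- Let φ : ℝ → ℝ be twice continuously differentiable and let s ∈ ℝ. Suppose the travelling wave ψ(x,t) = φ(x − st) solves the nonlinear variational wave equation, i.e. s²·φ″(ξ) = c(φ(ξ))·( c(φ(ξ))·φ′(ξ) )′ for all ξ ∈ ℝ. Then the first integral ξ ↦ ( φ′(ξ) )²·( s² − c(φ(ξ))² ) is constant on ℝ. In particular, if s² ≥ c(φ(ξ))² everywhere (or s² ≤ c(φ(ξ))² everywhere), then φ′(ξ)·√| s² − c(φ(ξ))² | has constant absolute value. -/

import Mathlib

/-- The wave speed `c(u) = √(α cos²u + β sin²u)`. -/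
noncomputable def waveC (α β u : ℝ) : ℝ :=
  Real.sqrt (α * Real.cos u ^ 2 + β * Real.sin u ^ 2)

/-- if the travelling-wave profile `φ` satisfies the ODE
`s² φ″ = c(φ)(c(φ)φ′)′` then `(φ′)²(s² − c(φ)²)` is a first integral
(i.e. constant), and in particular, if `s² − c(φ)²` has a constant sign,
then `φ′ √|s² − c(φ)²|` has constant absolute value. -/
theorem travelling_wave_first_integral
    (α β s : ℝ) (hα : 0 < α) (hβ : 0 < β)
    (φ : ℝ → ℝ) (hφ : ContDiff ℝ 2 φ)
    (hode : ∀ ξ : ℝ,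
      s ^ 2 * deriv (deriv φ) ξ
        = waveC α β (φ ξ) * deriv (fun z => waveC α β (φ z) * deriv φ z) ξ) :
    (∀ ξ₁ ξ₂ : ℝ,
      (deriv φ ξ₁) ^ 2 * (s ^ 2 - waveC α β (φ ξ₁) ^ 2)
        = (deriv φ ξ₂) ^ 2 * (s ^ 2 - waveC α β (φ ξ₂) ^ 2))
    ∧ (((∀ ξ : ℝ, waveC α β (φ ξ) ^ 2 ≤ s ^ 2)
          ∨ (∀ ξ : ℝ, s ^ 2 ≤ waveC α β (φ ξ) ^ 2)) →
        ∀ ξ₁ ξ₂ : ℝ,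
          |deriv φ ξ₁ * Real.sqrt (abs (s ^ 2 - waveC α β (φ ξ₁) ^ 2))|
            = |deriv φ ξ₂ * Real.sqrt (abs (s ^ 2 - waveC α β (φ ξ₂) ^ 2))|) := by
  set g : ℝ → ℝ := fun u => α * Real.cos u ^ 2 + β * Real.sin u ^ 2 with hgdef
  have hgpos : ∀ u, 0 < g u := by
    intro u
    show 0 < α * Real.cos u ^ 2 + β * Real.sin u ^ 2
    rcases le_total α β with h | h <;>
      nlinarith [Real.sin_sq_add_cos_sq u, sq_nonneg (Real.sin u), sq_nonneg (Real.cos u)]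
  have hwsq : ∀ u, waveC α β u ^ 2 = g u := fun u => Real.sq_sqrt (hgpos u).le
  have hwpos : ∀ u, 0 < waveC α β u := fun u => Real.sqrt_pos.mpr (hgpos u)
  have hφd : Differentiable ℝ φ := hφ.differentiable two_ne_zero
  have hφ1 : ContDiff ℝ 1 (deriv φ) := by
    have h2 : ContDiff ℝ (1 + 1) φ := by
      norm_num
      exact hφ
    exact (contDiff_succ_iff_deriv.mp h2).2.2
  have hd2 : ∀ ξ : ℝ, HasDerivAt (deriv φ) (deriv (deriv φ) ξ) ξ :=
    fun ξ => ((hφ1.differentiable one_ne_zero) ξ).hasDerivAt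
  -- derivative of g
  have hgd : ∀ u : ℝ, HasDerivAt g (2 * (β - α) * Real.sin u * Real.cos u) u := by
    intro u
    have h1 := ((Real.hasDerivAt_cos u).pow 2).const_mul α
    have h2 := ((Real.hasDerivAt_sin u).pow 2).const_mul β
    have := h1.add h2
    refine this.congr_deriv ?_
    ring
  -- derivative of g ∘ φ and of waveC ∘ φ
  have hG : ∀ ξ : ℝ, HasDerivAt (fun z => g (φ z))
      (2 * (β - α) * Real.sin (φ ξ) * Real.cos (φ ξ) * deriv φ ξ) ξ :=
    fun ξ => (hgd (φ ξ)).comp ξ (hφd ξ).hasDerivAt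
  have hC : ∀ ξ : ℝ, HasDerivAt (fun z => waveC α β (φ z))
      (2 * (β - α) * Real.sin (φ ξ) * Real.cos (φ ξ) * deriv φ ξ / (2 * waveC α β (φ ξ))) ξ := by
    intro ξ
    have := (hG ξ).sqrt (hgpos (φ ξ)).ne'
    exact this
  -- derivative of c(φ)·φ′
  have hP : ∀ ξ : ℝ, HasDerivAt (fun z => waveC α β (φ z) * deriv φ z)
      (2 * (β - α) * Real.sin (φ ξ) * Real.cos (φ ξ) * deriv φ ξ / (2 * waveC α β (φ ξ))
          * deriv φ ξ
        + waveC α β (φ ξ) * deriv (deriv φ) ξ) ξ :=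
    fun ξ => (hC ξ).mul (hd2 ξ)
  -- key algebraic identity from the ODE
  have key : ∀ ξ : ℝ,
      2 * s ^ 2 * deriv (deriv φ) ξ
        = 2 * (β - α) * Real.sin (φ ξ) * Real.cos (φ ξ) * (deriv φ ξ) ^ 2
          + 2 * g (φ ξ) * deriv (deriv φ) ξ := by
    intro ξ
    have h := hode ξ
    rw [(hP ξ).deriv] at h
    have hcne : waveC α β (φ ξ) ≠ 0 := (hwpos (φ ξ)).ne'
    have hsq := hwsq (φ ξ)
    field_simp at h
    have h' : waveC α β (φ ξ) *
        (2 * s ^ 2 * deriv (deriv φ) ξ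
          - (2 * (β - α) * Real.sin (φ ξ) * Real.cos (φ ξ) * (deriv φ ξ) ^ 2
            + 2 * g (φ ξ) * deriv (deriv φ) ξ)) = 0 := by
      linear_combination 2 * waveC α β (φ ξ) * h + 2 * waveC α β (φ ξ) * deriv (deriv φ) ξ * hsq
    rcases mul_eq_zero.mp h' with h0 | h0
    · exact absurd h0 hcne
    · linarith
  -- the first integral has zero derivative
  have hF : ∀ ξ : ℝ, HasDerivAt (fun z => (deriv φ z) ^ 2 * (s ^ 2 - g (φ z))) 0 ξ := by
    intro ξ
    have h1 : HasDerivAt (fun z => (deriv φ z) ^ 2)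
        (2 * deriv φ ξ ^ 1 * deriv (deriv φ) ξ) ξ := (hd2 ξ).pow 2
    have h2 : HasDerivAt (fun z => s ^ 2 - g (φ z))
        (0 - 2 * (β - α) * Real.sin (φ ξ) * Real.cos (φ ξ) * deriv φ ξ) ξ :=
      (hasDerivAt_const ξ (s ^ 2)).sub (hG ξ)
    have h3 := h1.mul h2
    have hz : 2 * deriv φ ξ ^ 1 * deriv (deriv φ) ξ * (s ^ 2 - g (φ ξ))
        + (deriv φ ξ) ^ 2 * (0 - 2 * (β - α) * Real.sin (φ ξ) * Real.cos (φ ξ) * deriv φ ξ)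
        = 0 := by
      have := key ξ
      linear_combination (deriv φ ξ) * this
    rwa [hz] at h3
  have hconst : ∀ ξ₁ ξ₂ : ℝ,
      (deriv φ ξ₁) ^ 2 * (s ^ 2 - g (φ ξ₁)) = (deriv φ ξ₂) ^ 2 * (s ^ 2 - g (φ ξ₂)) := by
    intro ξ₁ ξ₂
    exact is_const_of_deriv_eq_zero (fun x => (hF x).differentiableAt)
      (fun x => (hF x).deriv) ξ₁ ξ₂
  have main : ∀ ξ₁ ξ₂ : ℝ,
      (deriv φ ξ₁) ^ 2 * (s ^ 2 - waveC α β (φ ξ₁) ^ 2)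
        = (deriv φ ξ₂) ^ 2 * (s ^ 2 - waveC α β (φ ξ₂) ^ 2) := by
    intro ξ₁ ξ₂
    rw [hwsq, hwsq]
    exact hconst ξ₁ ξ₂
  refine ⟨main, fun _ ξ₁ ξ₂ => ?_⟩
  have habs : ∀ ξ : ℝ,
      (abs (deriv φ ξ * Real.sqrt (abs (s ^ 2 - waveC α β (φ ξ) ^ 2)))) ^ 2
        = abs ((deriv φ ξ) ^ 2 * (s ^ 2 - waveC α β (φ ξ) ^ 2)) := by
    intro ξ
    rw [← abs_pow, mul_pow, Real.sq_sqrt (abs_nonneg _), abs_mul, abs_mul, abs_pow, abs_abs]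
  calc abs (deriv φ ξ₁ * Real.sqrt (abs (s ^ 2 - waveC α β (φ ξ₁) ^ 2)))
      = Real.sqrt ((abs (deriv φ ξ₁ * Real.sqrt (abs (s ^ 2 - waveC α β (φ ξ₁) ^ 2)))) ^ 2) :=
        (Real.sqrt_sq (abs_nonneg _)).symm
    _ = Real.sqrt ((abs (deriv φ ξ₂ * Real.sqrt (abs (s ^ 2 - waveC α β (φ ξ₂) ^ 2)))) ^ 2) := by
        rw [habs, habs, main ξ₁ ξ₂]
    _ = abs (deriv φ ξ₂ * Real.sqrt (abs (s ^ 2 - waveC α β (φ ξ₂) ^ 2))) :=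
        Real.sqrt_sq (abs_nonneg _)
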